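/- Let G be a finitely generated residually finite group and α ∈ Aut(G). Then the twisted conjugation quandle Conj(G, α) is a residually finite quandle. -/

import Mathlib

/-- Conjugation by an equivalence, as a monoid hom between permutation groups. -/
def myPermCongrHom {A B : Type*} (e : A ≃ B) : Equiv.Perm A →* Equiv.Perm B where
  toFun := e.permCongr
  map_one' := by ext b; simp
  map_mul' p q := by ext b; simp [Equiv.permCongr_apply]

lemma myFiniteHom {G M : Type*} [Group G] [Monoid M] [Finite M] (hfg : Group.FG G) :
    Finite (G →* M) := by
  obtain ⟨S, hS, hSfin⟩ := Group.fg_iff.mp hfg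
  haveI := hSfin.to_subtype
  exact Finite.of_injective (fun f : G →* M => (fun s : S => f s))
    (fun f g h => MonoidHom.eq_of_eqOn_dense hS (fun x hx => congrFun h ⟨x, hx⟩))

lemma myFiniteSubgroups {G : Type*} [Group G] (hfg : Group.FG G) (n : ℕ) (hn : n ≠ 0) :
    Finite {H : Subgroup G // H.index = n} := by
  haveI : Finite (G →* Equiv.Perm (Fin n)) := myFiniteHom hfg
  have key : ∀ H : {H : Subgroup G // H.index = n},
      ∃ p : (G →* Equiv.Perm (Fin n)) × Fin n, ∀ g : G, g ∈ H.1 ↔ p.1 g p.2 = p.2 := by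
    rintro ⟨H, hH⟩
    haveI : H.FiniteIndex := ⟨by rw [hH]; exact hn⟩
    haveI : Finite (G ⧸ H) := H.finite_quotient_of_finiteIndex
    have hcard : Nat.card (G ⧸ H) = n := by rw [← hH]; rfl
    let e : (G ⧸ H) ≃ Fin n := Finite.equivFinOfCardEq hcard
    refine ⟨⟨(myPermCongrHom e).comp (MulAction.toPermHom G (G ⧸ H)), e ((1 : G) : G ⧸ H)⟩, ?_⟩
    intro g
    have h1 : ((myPermCongrHom e).comp (MulAction.toPermHom G (G ⧸ H))) g (e ((1 : G) : G ⧸ H))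
        = e (g • ((1 : G) : G ⧸ H)) := by
      simp [myPermCongrHom, Equiv.permCongr_apply]
    rw [h1]
    have hstab : g ∈ H ↔ g • ((1 : G) : G ⧸ H) = ((1 : G) : G ⧸ H) := by
      conv_lhs => rw [← MulAction.stabilizer_quotient H]
      exact MulAction.mem_stabilizer_iff
    simp only [Subgroup.mem_mk] at *
    rw [hstab]
    exact ⟨fun h => by rw [h], fun h => e.injective h⟩
  choose f hf using key
  refine Finite.of_injective f (fun H K h => ?_)
  apply Subtype.ext
  ext g
  rw [hf H g, hf K g, h]

lemma myComapInf {G : Type*} [Group G] (n : ℕ) (e : G ≃* G) :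
    (⨅ H : {H : Subgroup G // H.index = n}, H.1).comap (e : G →* G)
      = ⨅ H : {H : Subgroup G // H.index = n}, H.1 := by
  rw [Subgroup.comap_iInf]
  apply le_antisymm
  · apply le_iInf
    rintro ⟨K, hK⟩
    have hmap : (K.map (e : G →* G)).index = n := by
      rw [K.index_map_of_injective e.injective,
        MonoidHom.range_eq_top_of_surjective _ e.surjective, Subgroup.index_top, mul_one, hK]
    refine iInf_le_of_le ⟨K.map (e : G →* G), hmap⟩ ?_
    rw [Subgroup.comap_map_eq_self_of_injective e.injective]
  · apply le_iInf
    rintro ⟨K, hK⟩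
    have hcomap : (K.comap (e : G →* G)).index = n := by
      rw [K.index_comap_of_surjective e.surjective, hK]
    exact iInf_le _ (⟨K.comap (e : G →* G), hcomap⟩ : {H : Subgroup G // H.index = n})


/-- The twisted conjugation quandle `Conj(G, α)` on the underlying set of the group `G`,
with operation `x * y = α (y⁻¹ x) y`.  (In Mathlib's left-action convention,
`Shelf.act y x` is the paper's `x * y`.) -/
def twistedConjQuandle {G : Type*} [Group G] (α : G ≃* G) : Quandle G where
  act a b := α (a⁻¹ * b) * a
  self_distrib := by
    intro x y z
    simp only [map_mul, map_inv, mul_inv_rev, inv_inv, mul_assoc, mul_inv_cancel_left,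
      inv_mul_cancel_left]
  invAct a b := a * α.symm (b * a⁻¹)
  left_inv a b := by
    simp only [map_mul, map_inv, MulEquiv.symm_apply_apply, mul_inv_rev, inv_inv, mul_assoc,
      mul_inv_cancel_left, inv_mul_cancel_left, mul_inv_cancel, mul_one]
  right_inv a b := by
    simp only [map_mul, map_inv, MulEquiv.apply_symm_apply, mul_inv_rev, inv_inv, mul_assoc,
      mul_inv_cancel_left, inv_mul_cancel_left, inv_mul_cancel, mul_one]
  fix := by
    intro x
    simp

/-- A quandle `X` is *residually finite* if any two distinct elements of `X` can be separated
by a quandle homomorphism into a finite quandle. -/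
def QuandleResiduallyFinite (X : Type*) [Quandle X] : Prop :=
  ∀ x y : X, x ≠ y →
    ∃ (F : Type) (_ : Quandle F) (_ : Finite F) (φ : ShelfHom X F), φ x ≠ φ y

/-- If `G` is a finitely generated residually finite group and `α ∈ Aut(G)`, then the twisted
conjugation quandle `Conj(G, α)` is a residually finite quandle. -/
theorem twistedConj_residuallyFinite {G : Type*} [Group G] (hfg : Group.FG G)
    (hrf : ∀ x : G, x ≠ 1 → ∃ (F : Type) (_ : Group F) (_ : Finite F) (φ : G →* F), φ x ≠ 1)
    (α : G ≃* G) :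
    @QuandleResiduallyFinite G (twistedConjQuandle α) := by
  intro x y hxy
  have hz : x⁻¹ * y ≠ 1 := fun h => hxy (by
    have := congrArg (x * ·) h
    simpa using this.symm)
  obtain ⟨F₀, _, _, φ, hφ⟩ := hrf _ hz
  set N := φ.ker with hNdef
  haveI : Finite φ.range := Subtype.finite
  haveI hNfi : N.FiniteIndex := Subgroup.finiteIndex_ker φ
  set n := N.index with hndef
  have hn : n ≠ 0 := hNfi.index_ne_zero
  haveI := myFiniteSubgroups hfg n hn
  set M : Subgroup G := ⨅ H : {H : Subgroup G // H.index = n}, H.1 with hMdef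
  have hinv : ∀ e : G ≃* G, M.comap (e : G →* G) = M := fun e => myComapInf n e
  have hMN : M ≤ N := iInf_le _ (⟨N, rfl⟩ : {H : Subgroup G // H.index = n})
  haveI hMnormal : M.Normal := by
    constructor
    intro m hm g
    have h2 : m ∈ M.comap ((MulAut.conj g : G ≃* G) : G →* G) := (hinv _).symm ▸ hm
    simpa [MulAut.conj_apply] using Subgroup.mem_comap.mp h2
  haveI : ∀ H : {H : Subgroup G // H.index = n}, (H.1).FiniteIndex :=
    fun H => ⟨by rw [H.2]; exact hn⟩
  haveI : M.FiniteIndex := Subgroup.finiteIndex_iInf this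
  haveI : Finite (G ⧸ M) := Subgroup.finite_quotient_of_finiteIndex
  have hmapα : M.map (α : G →* G) = M := by
    rw [Subgroup.map_equiv_eq_comap_symm]
    exact hinv α.symm
  let β : (G ⧸ M) ≃* (G ⧸ M) := QuotientGroup.congr M M α hmapα
  obtain ⟨k, ⟨e⟩⟩ := Finite.exists_equiv_fin (G ⧸ M)
  haveI : Small.{0} (G ⧸ M) := Small.mk' e
  haveI : Finite (Shrink.{0} (G ⧸ M)) := Finite.of_equiv _ (equivShrink (G ⧸ M))
  let ι : (G ⧸ M) ≃* Shrink.{0} (G ⧸ M) := (Shrink.mulEquiv).symm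
  let β' : Shrink.{0} (G ⧸ M) ≃* Shrink.{0} (G ⧸ M) := (ι.symm.trans β).trans ι
  have hβ' : ∀ q : G ⧸ M, β' (ι q) = ι (β q) := by
    intro q
    simp [β', ι]
  have hβmk : ∀ g : G, β (QuotientGroup.mk g) = QuotientGroup.mk (α g) := fun g => rfl
  letI qF : Quandle (Shrink.{0} (G ⧸ M)) := twistedConjQuandle β'
  refine ⟨Shrink.{0} (G ⧸ M), qF, inferInstance,
    @ShelfHom.mk G (Shrink.{0} (G ⧸ M))
      (@Rack.toShelf G (@Quandle.toRack G (twistedConjQuandle α)))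
      (@Rack.toShelf _ (@Quandle.toRack _ qF)) (fun g => ι (QuotientGroup.mk g)) ?_, ?_⟩
  · intro a b
    show ι (QuotientGroup.mk (α (a⁻¹ * b) * a))
        = β' ((ι (QuotientGroup.mk a))⁻¹ * ι (QuotientGroup.mk b)) * ι (QuotientGroup.mk a)
    rw [← map_inv, ← map_mul, ← QuotientGroup.mk_inv, ← QuotientGroup.mk_mul, hβ', hβmk,
      QuotientGroup.mk_mul, map_mul]
  · intro h
    have h2 : (QuotientGroup.mk x : G ⧸ M) = QuotientGroup.mk y := ι.injective h
    have h3 : x⁻¹ * y ∈ M := (QuotientGroup.eq).mp h2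
    exact hφ (MonoidHom.mem_ker.mp (hMN h3))
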